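/- Let D(g) be the Drinfel'd double Lie algebra of a finite-dimensional real Lie bialgebra with structure constants (f, c) satisfying the compatibility condition, and let ι : D(g) → U(D(g)) be the canonical embedding. Define the canonical classical r-matrix r = Σ_i ι(x^i) ⊗ ι(X_i) in U(D(g)) ⊗ U(D(g)), and set r_{12} = Σ_i ι(x^i) ⊗ ι(X_i) ⊗ 1, r_{13} = Σ_i ι(x^i) ⊗ 1 ⊗ ι(X_i), r_{23} = Σ_i 1 ⊗ ι(x^i) ⊗ ι(X_i) in U(D(g)) ⊗ U(D(g)) ⊗ U(D(g)). Then r satisfies the classical Yang–Baxter equation: [r_{12}, r_{13}] + [r_{12}, r_{23}] + [r_{13}, r_{23}] = 0, where [·,·] denotes the commutator in the associative algebra U(D(g))^{⊗3}. -/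

import Mathlib

open scoped BigOperators TensorProduct

/-- `r₁₂ = Σ_i x^i ⊗ X_i ⊗ 1` in `U(D(g)) ⊗ U(D(g)) ⊗ U(D(g))`. -/
noncomputable def rmat12 (n : ℕ) (L : Type) [LieRing L] [LieAlgebra ℝ L]
    (b : Module.Basis (Fin n ⊕ Fin n) ℝ L) :
    TensorProduct ℝ (UniversalEnvelopingAlgebra ℝ L)
      (TensorProduct ℝ (UniversalEnvelopingAlgebra ℝ L) (UniversalEnvelopingAlgebra ℝ L)) :=
  ∑ i : Fin n, UniversalEnvelopingAlgebra.ι ℝ (b (Sum.inl i)) ⊗ₜ[ℝ]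
    (UniversalEnvelopingAlgebra.ι ℝ (b (Sum.inr i)) ⊗ₜ[ℝ] 1)

/-- `r₁₃ = Σ_i x^i ⊗ 1 ⊗ X_i` in `U(D(g)) ⊗ U(D(g)) ⊗ U(D(g))`. -/
noncomputable def rmat13 (n : ℕ) (L : Type) [LieRing L] [LieAlgebra ℝ L]
    (b : Module.Basis (Fin n ⊕ Fin n) ℝ L) :
    TensorProduct ℝ (UniversalEnvelopingAlgebra ℝ L)
      (TensorProduct ℝ (UniversalEnvelopingAlgebra ℝ L) (UniversalEnvelopingAlgebra ℝ L)) :=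
  ∑ i : Fin n, UniversalEnvelopingAlgebra.ι ℝ (b (Sum.inl i)) ⊗ₜ[ℝ]
    ((1 : UniversalEnvelopingAlgebra ℝ L) ⊗ₜ[ℝ] UniversalEnvelopingAlgebra.ι ℝ (b (Sum.inr i)))

/-- `r₂₃ = Σ_i 1 ⊗ x^i ⊗ X_i` in `U(D(g)) ⊗ U(D(g)) ⊗ U(D(g))`. -/
noncomputable def rmat23 (n : ℕ) (L : Type) [LieRing L] [LieAlgebra ℝ L]
    (b : Module.Basis (Fin n ⊕ Fin n) ℝ L) :
    TensorProduct ℝ (UniversalEnvelopingAlgebra ℝ L)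
      (TensorProduct ℝ (UniversalEnvelopingAlgebra ℝ L) (UniversalEnvelopingAlgebra ℝ L)) :=
  ∑ i : Fin n, (1 : UniversalEnvelopingAlgebra ℝ L) ⊗ₜ[ℝ]
    (UniversalEnvelopingAlgebra.ι ℝ (b (Sum.inl i)) ⊗ₜ[ℝ]
      UniversalEnvelopingAlgebra.ι ℝ (b (Sum.inr i)))

attribute [local instance] LieRing.ofAssociativeRing

lemma iota_comm {L : Type} [LieRing L] [LieAlgebra ℝ L] (a b : L) :
    UniversalEnvelopingAlgebra.ι ℝ a * UniversalEnvelopingAlgebra.ι ℝ b -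
      UniversalEnvelopingAlgebra.ι ℝ b * UniversalEnvelopingAlgebra.ι ℝ a =
      UniversalEnvelopingAlgebra.ι ℝ ⁅a, b⁆ := by
  rw [LieHom.map_lie, Ring.lie_def]

lemma sum3_swap13 {M : Type*} [AddCommMonoid M] {n : ℕ} (g : Fin n → Fin n → Fin n → M) :
    (∑ i : Fin n, ∑ j : Fin n, ∑ k : Fin n, g i j k)
      = ∑ i : Fin n, ∑ j : Fin n, ∑ k : Fin n, g k j i := by
  calc (∑ i : Fin n, ∑ j : Fin n, ∑ k : Fin n, g i j k)
      = ∑ j : Fin n, ∑ i : Fin n, ∑ k : Fin n, g i j k := Finset.sum_comm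
    _ = ∑ j : Fin n, ∑ k : Fin n, ∑ i : Fin n, g i j k :=
        Finset.sum_congr rfl fun _ _ => Finset.sum_comm
    _ = ∑ k : Fin n, ∑ j : Fin n, ∑ i : Fin n, g i j k := Finset.sum_comm

lemma sum3_swap23 {M : Type*} [AddCommMonoid M] {n : ℕ} (g : Fin n → Fin n → Fin n → M) :
    (∑ i : Fin n, ∑ j : Fin n, ∑ k : Fin n, g i j k)
      = ∑ i : Fin n, ∑ j : Fin n, ∑ k : Fin n, g i k j :=
  Finset.sum_congr rfl fun _ _ => Finset.sum_comm


lemma iota_sum {L : Type} [LieRing L] [LieAlgebra ℝ L] {α : Type*} (s : Finset α) (g : α → L) :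
    UniversalEnvelopingAlgebra.ι ℝ (∑ a ∈ s, g a)
      = ∑ a ∈ s, UniversalEnvelopingAlgebra.ι ℝ (g a) := by
  rw [← LieHom.coe_toLinearMap, map_sum]

lemma iota_smul {L : Type} [LieRing L] [LieAlgebra ℝ L] (r : ℝ) (v : L) :
    UniversalEnvelopingAlgebra.ι ℝ (r • v) = r • UniversalEnvelopingAlgebra.ι ℝ v := by
  rw [← LieHom.coe_toLinearMap, map_smul]

lemma iota_sub {L : Type} [LieRing L] [LieAlgebra ℝ L] (v w : L) :
    UniversalEnvelopingAlgebra.ι ℝ (v - w)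
      = UniversalEnvelopingAlgebra.ι ℝ v - UniversalEnvelopingAlgebra.ι ℝ w := by
  rw [← LieHom.coe_toLinearMap, map_sub]

set_option maxHeartbeats 1000000 in
set_option synthInstance.maxHeartbeats 1000000 in
theorem double_rmatrix_CYBE (n : ℕ) (f c : Fin n → Fin n → Fin n → ℝ)
    (hcomp : ∀ a b i j : Fin n,
      (∑ k, f a b k * c k i j) =
        ∑ k, (f a k i * c b k j + f k b i * c a k j + f a k j * c b i k +
          f k b j * c a i k))
    (L : Type) [LieRing L] [LieAlgebra ℝ L]
    (b : Module.Basis (Fin n ⊕ Fin n) ℝ L)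
    (hxx : ∀ i j, ⁅b (Sum.inl i), b (Sum.inl j)⁆ = ∑ k, f i j k • b (Sum.inl k))
    (hXX : ∀ i j, ⁅b (Sum.inr i), b (Sum.inr j)⁆ = ∑ k, c k i j • b (Sum.inr k))
    (hxX : ∀ i j, ⁅b (Sum.inl i), b (Sum.inr j)⁆ =
      (∑ k, c i j k • b (Sum.inl k)) - ∑ k, f i k j • b (Sum.inr k)) :
    (rmat12 n L b * rmat13 n L b - rmat13 n L b * rmat12 n L b) +
      (rmat12 n L b * rmat23 n L b - rmat23 n L b * rmat12 n L b) +
      (rmat13 n L b * rmat23 n L b - rmat23 n L b * rmat13 n L b) = 0 := by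
  classical
  -- antisymmetry of f
  have hfanti : ∀ i j k, f j i k = - f i j k := by
    intro i j k
    have h0 : ∑ m, (fun m => f i j m + f j i m) m • (⇑b ∘ Sum.inl) m = 0 := by
      simp only [Function.comp, add_smul, Finset.sum_add_distrib, ← hxx]
      rw [← lie_skew]
      exact neg_add_cancel _
    have li := Fintype.linearIndependent_iff.mp
      (b.linearIndependent.comp Sum.inl Sum.inl_injective)
    have := li _ h0 k
    linarith
  -- skew bracket for mixed terms
  have hXx : ∀ i j, ⁅b (Sum.inr i), b (Sum.inl j)⁆ =
      (∑ k, f j k i • b (Sum.inr k)) - ∑ k, c j i k • b (Sum.inl k) := by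
    intro i j
    rw [← lie_skew, hxX, neg_sub]
  -- the three commutators
  have e1 : rmat12 n L b * rmat13 n L b - rmat13 n L b * rmat12 n L b
      = ∑ i : Fin n, ∑ j : Fin n, ∑ k : Fin n,
          f i j k • (UniversalEnvelopingAlgebra.ι ℝ (b (Sum.inl k)) ⊗ₜ[ℝ]
            (UniversalEnvelopingAlgebra.ι ℝ (b (Sum.inr i)) ⊗ₜ[ℝ]
              UniversalEnvelopingAlgebra.ι ℝ (b (Sum.inr j)))) := by
    have p1 : rmat12 n L b * rmat13 n L b
        = ∑ i : Fin n, ∑ j : Fin n,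
            (UniversalEnvelopingAlgebra.ι ℝ (b (Sum.inl i)) *
              UniversalEnvelopingAlgebra.ι ℝ (b (Sum.inl j))) ⊗ₜ[ℝ]
            (UniversalEnvelopingAlgebra.ι ℝ (b (Sum.inr i)) ⊗ₜ[ℝ]
              UniversalEnvelopingAlgebra.ι ℝ (b (Sum.inr j))) := by
      rw [rmat12, rmat13, Finset.sum_mul_sum]
      simp [Algebra.TensorProduct.tmul_mul_tmul]
    have p2 : rmat13 n L b * rmat12 n L b
        = ∑ i : Fin n, ∑ j : Fin n,
            (UniversalEnvelopingAlgebra.ι ℝ (b (Sum.inl j)) *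
              UniversalEnvelopingAlgebra.ι ℝ (b (Sum.inl i))) ⊗ₜ[ℝ]
            (UniversalEnvelopingAlgebra.ι ℝ (b (Sum.inr i)) ⊗ₜ[ℝ]
              UniversalEnvelopingAlgebra.ι ℝ (b (Sum.inr j))) := by
      rw [rmat13, rmat12, Finset.sum_mul_sum]
      simp only [Algebra.TensorProduct.tmul_mul_tmul, one_mul, mul_one]
      exact Finset.sum_comm
    rw [p1, p2, ← Finset.sum_sub_distrib]
    refine Finset.sum_congr rfl fun i _ => ?_
    rw [← Finset.sum_sub_distrib]
    refine Finset.sum_congr rfl fun j _ => ?_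
    rw [← TensorProduct.sub_tmul, iota_comm, hxx, iota_sum, TensorProduct.sum_tmul]
    exact Finset.sum_congr rfl fun k _ => by
      rw [iota_smul, ← TensorProduct.smul_tmul']
  have e3 : rmat13 n L b * rmat23 n L b - rmat23 n L b * rmat13 n L b
      = ∑ i : Fin n, ∑ j : Fin n, ∑ k : Fin n,
          c k i j • (UniversalEnvelopingAlgebra.ι ℝ (b (Sum.inl i)) ⊗ₜ[ℝ]
            (UniversalEnvelopingAlgebra.ι ℝ (b (Sum.inl j)) ⊗ₜ[ℝ]
              UniversalEnvelopingAlgebra.ι ℝ (b (Sum.inr k)))) := by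
    have p1 : rmat13 n L b * rmat23 n L b
        = ∑ i : Fin n, ∑ j : Fin n,
            UniversalEnvelopingAlgebra.ι ℝ (b (Sum.inl i)) ⊗ₜ[ℝ]
            (UniversalEnvelopingAlgebra.ι ℝ (b (Sum.inl j)) ⊗ₜ[ℝ]
              (UniversalEnvelopingAlgebra.ι ℝ (b (Sum.inr i)) *
                UniversalEnvelopingAlgebra.ι ℝ (b (Sum.inr j)))) := by
      rw [rmat13, rmat23, Finset.sum_mul_sum]
      simp [Algebra.TensorProduct.tmul_mul_tmul]
    have p2 : rmat23 n L b * rmat13 n L b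
        = ∑ i : Fin n, ∑ j : Fin n,
            UniversalEnvelopingAlgebra.ι ℝ (b (Sum.inl i)) ⊗ₜ[ℝ]
            (UniversalEnvelopingAlgebra.ι ℝ (b (Sum.inl j)) ⊗ₜ[ℝ]
              (UniversalEnvelopingAlgebra.ι ℝ (b (Sum.inr j)) *
                UniversalEnvelopingAlgebra.ι ℝ (b (Sum.inr i)))) := by
      rw [rmat23, rmat13, Finset.sum_mul_sum]
      simp only [Algebra.TensorProduct.tmul_mul_tmul, one_mul, mul_one]
      exact Finset.sum_comm
    rw [p1, p2, ← Finset.sum_sub_distrib]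
    refine Finset.sum_congr rfl fun i _ => ?_
    rw [← Finset.sum_sub_distrib]
    refine Finset.sum_congr rfl fun j _ => ?_
    rw [← TensorProduct.tmul_sub, ← TensorProduct.tmul_sub, iota_comm, hXX, iota_sum,
      TensorProduct.tmul_sum, TensorProduct.tmul_sum]
    exact Finset.sum_congr rfl fun k _ => by
      rw [iota_smul, TensorProduct.tmul_smul, TensorProduct.tmul_smul]
  have e2 : rmat12 n L b * rmat23 n L b - rmat23 n L b * rmat12 n L b
      = (∑ i : Fin n, ∑ j : Fin n, ∑ k : Fin n,
          f j k i • (UniversalEnvelopingAlgebra.ι ℝ (b (Sum.inl i)) ⊗ₜ[ℝ]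
            (UniversalEnvelopingAlgebra.ι ℝ (b (Sum.inr k)) ⊗ₜ[ℝ]
              UniversalEnvelopingAlgebra.ι ℝ (b (Sum.inr j)))))
        - ∑ i : Fin n, ∑ j : Fin n, ∑ k : Fin n,
          c j i k • (UniversalEnvelopingAlgebra.ι ℝ (b (Sum.inl i)) ⊗ₜ[ℝ]
            (UniversalEnvelopingAlgebra.ι ℝ (b (Sum.inl k)) ⊗ₜ[ℝ]
              UniversalEnvelopingAlgebra.ι ℝ (b (Sum.inr j)))) := by
    have p1 : rmat12 n L b * rmat23 n L b
        = ∑ i : Fin n, ∑ j : Fin n,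
            UniversalEnvelopingAlgebra.ι ℝ (b (Sum.inl i)) ⊗ₜ[ℝ]
            ((UniversalEnvelopingAlgebra.ι ℝ (b (Sum.inr i)) *
                UniversalEnvelopingAlgebra.ι ℝ (b (Sum.inl j))) ⊗ₜ[ℝ]
              UniversalEnvelopingAlgebra.ι ℝ (b (Sum.inr j))) := by
      rw [rmat12, rmat23, Finset.sum_mul_sum]
      simp [Algebra.TensorProduct.tmul_mul_tmul]
    have p2 : rmat23 n L b * rmat12 n L b
        = ∑ i : Fin n, ∑ j : Fin n,
            UniversalEnvelopingAlgebra.ι ℝ (b (Sum.inl i)) ⊗ₜ[ℝ]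
            ((UniversalEnvelopingAlgebra.ι ℝ (b (Sum.inl j)) *
                UniversalEnvelopingAlgebra.ι ℝ (b (Sum.inr i))) ⊗ₜ[ℝ]
              UniversalEnvelopingAlgebra.ι ℝ (b (Sum.inr j))) := by
      rw [rmat23, rmat12, Finset.sum_mul_sum]
      simp only [Algebra.TensorProduct.tmul_mul_tmul, one_mul, mul_one]
      exact Finset.sum_comm
    rw [p1, p2, ← Finset.sum_sub_distrib, ← Finset.sum_sub_distrib]
    refine Finset.sum_congr rfl fun i _ => ?_
    rw [← Finset.sum_sub_distrib, ← Finset.sum_sub_distrib]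
    refine Finset.sum_congr rfl fun j _ => ?_
    rw [← TensorProduct.tmul_sub, ← TensorProduct.sub_tmul, iota_comm, hXx, iota_sub,
      iota_sum, iota_sum, TensorProduct.sub_tmul, TensorProduct.tmul_sub,
      TensorProduct.sum_tmul, TensorProduct.sum_tmul,
      TensorProduct.tmul_sum, TensorProduct.tmul_sum]
    congr 1
    · exact Finset.sum_congr rfl fun k _ => by
        rw [iota_smul, ← TensorProduct.smul_tmul', TensorProduct.tmul_smul]
    · exact Finset.sum_congr rfl fun k _ => by
        rw [iota_smul, ← TensorProduct.smul_tmul', TensorProduct.tmul_smul]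
  rw [e1, e2, e3]
  -- now pure index gymnastics
  rw [sum3_swap13 (fun i j k => f j k i • (UniversalEnvelopingAlgebra.ι ℝ (b (Sum.inl i)) ⊗ₜ[ℝ]
      (UniversalEnvelopingAlgebra.ι ℝ (b (Sum.inr k)) ⊗ₜ[ℝ]
        UniversalEnvelopingAlgebra.ι ℝ (b (Sum.inr j))))),
    sum3_swap23 (fun i j k => c j i k • (UniversalEnvelopingAlgebra.ι ℝ (b (Sum.inl i)) ⊗ₜ[ℝ]
      (UniversalEnvelopingAlgebra.ι ℝ (b (Sum.inl k)) ⊗ₜ[ℝ]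
        UniversalEnvelopingAlgebra.ι ℝ (b (Sum.inr j)))))]
  have hA : (∑ i : Fin n, ∑ j : Fin n, ∑ k : Fin n,
      f j i k • (UniversalEnvelopingAlgebra.ι ℝ (b (Sum.inl k)) ⊗ₜ[ℝ]
        (UniversalEnvelopingAlgebra.ι ℝ (b (Sum.inr i)) ⊗ₜ[ℝ]
          UniversalEnvelopingAlgebra.ι ℝ (b (Sum.inr j)))))
      = -(∑ i : Fin n, ∑ j : Fin n, ∑ k : Fin n,
      f i j k • (UniversalEnvelopingAlgebra.ι ℝ (b (Sum.inl k)) ⊗ₜ[ℝ]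
        (UniversalEnvelopingAlgebra.ι ℝ (b (Sum.inr i)) ⊗ₜ[ℝ]
          UniversalEnvelopingAlgebra.ι ℝ (b (Sum.inr j))))) := by
    rw [← Finset.sum_neg_distrib]
    refine Finset.sum_congr rfl fun i _ => ?_
    rw [← Finset.sum_neg_distrib]
    refine Finset.sum_congr rfl fun j _ => ?_
    rw [← Finset.sum_neg_distrib]
    refine Finset.sum_congr rfl fun k _ => ?_
    rw [hfanti i j k]
    module
  rw [hA]
  abel
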